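/- Let φ : ℝ → ℂ be an integrable function, h > 0, n_f a positive even integer, L = n_f h, and define the periodization φ̃(x) = Σ_{n∈ℤ} φ(x + Ln). For a point r ∈ ℝ, the discrete Fourier transform of the spread samples satisfies: Σ_{ℓ=-n_f/2}^{n_f/2-1} e^{2πi k ℓ/n_f} φ̃(r - hℓ) = (1/h) Σ_{m∈ℤ} φ̂((2π/L)(k + m n_f)) e^{i(2π/L)(k + m n_f) r} for every integer k, where φ̂(ξ) = ∫_ℝ φ(x) e^{-iξx} dx, assuming φ̂ decays fast enough for Poisson summation to hold (e.g., φ Schwartz). -/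

import Mathlib

open Real MeasureTheory

noncomputable section

/-- Fourier transform with convention `φ̂(ξ) = ∫_ℝ φ(x) e^{-iξx} dx`. -/
def fourierNeg (φ : ℝ → ℂ) (ξ : ℝ) : ℂ :=
  ∫ x : ℝ, φ x * Complex.exp (-(Complex.I * ξ * x))

private lemma norm_exp_eq_one' {z : ℂ} (a : ℝ) (hz : z = (a : ℂ) * Complex.I) :
    ‖Complex.exp z‖ = 1 := by
  rw [hz, Complex.norm_exp_ofReal_mul_I]

private lemma char_sum (nf : ℕ) (hnf : 0 < nf) (hEven : Even nf) (c : ℤ) :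
    ∑ ℓ ∈ Finset.Icc (-(nf : ℤ) / 2) ((nf : ℤ) / 2 - 1),
      Complex.exp (2 * π * Complex.I * c * ℓ / nf)
    = if (nf : ℤ) ∣ c then (nf : ℂ) else 0 := by
  obtain ⟨t, ht⟩ := hEven
  have hnfZ : (nf : ℤ) = (t : ℤ) + (t : ℤ) := by exact_mod_cast ht
  have hnf0 : (nf : ℂ) ≠ 0 := Nat.cast_ne_zero.mpr hnf.ne'
  set a : ℤ := (nf : ℤ) / 2 with ha
  by_cases hdvd : (nf : ℤ) ∣ c
  · obtain ⟨s, hs⟩ := hdvd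
    have hone : ∀ ℓ ∈ Finset.Icc (-(nf : ℤ) / 2) ((nf : ℤ) / 2 - 1),
        Complex.exp (2 * π * Complex.I * c * ℓ / nf) = 1 := by
      intro ℓ _
      have hc : (c : ℂ) = (nf : ℂ) * (s : ℂ) := by exact_mod_cast hs
      have harg : (2 * π * Complex.I * c * ℓ / nf : ℂ)
          = ((s * ℓ : ℤ) : ℂ) * (2 * π * Complex.I) := by
        rw [hc]; push_cast; field_simp
      rw [harg, Complex.exp_int_mul_two_pi_mul_I]
    rw [Finset.sum_congr rfl hone, Finset.sum_const, if_pos ⟨s, hs⟩]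
    have hcard : (Finset.Icc (-(nf : ℤ) / 2) ((nf : ℤ) / 2 - 1)).card = nf := by
      rw [Int.card_Icc]; omega
    rw [hcard]; simp
  · set w : ℂ := Complex.exp (2 * π * Complex.I * c / nf) with hw
    have hterm : ∀ ℓ : ℤ, Complex.exp (2 * π * Complex.I * c * ℓ / nf) = w ^ ℓ := by
      intro ℓ
      rw [hw, ← Complex.exp_int_mul]
      congr 1; ring
    have hw0 : w ≠ 0 := Complex.exp_ne_zero _
    have hwnf : w ^ (nf : ℕ) = 1 := by
      rw [hw, ← Complex.exp_nat_mul]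
      have harg : (nf : ℂ) * (2 * π * Complex.I * c / nf) = (c : ℂ) * (2 * π * Complex.I) := by
        field_simp
      rw [harg, Complex.exp_int_mul_two_pi_mul_I]
    have hw1 : w ≠ 1 := by
      intro hww
      apply hdvd
      rw [hw, Complex.exp_eq_one_iff] at hww
      obtain ⟨n, hn⟩ := hww
      have hI : Complex.I ≠ 0 := Complex.I_ne_zero
      have hπ : (π : ℂ) ≠ 0 := Complex.ofReal_ne_zero.mpr Real.pi_ne_zero
      have h2πI : (2 * (π : ℂ) * Complex.I) ≠ 0 := by
        exact mul_ne_zero (mul_ne_zero two_ne_zero hπ) hI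
      have e1 : (2 * (π : ℂ) * Complex.I) * ((c : ℂ) / (nf : ℂ))
          = (2 * (π : ℂ) * Complex.I) * (n : ℂ) := by
        linear_combination hn
      have e2 : (c : ℂ) / (nf : ℂ) = (n : ℂ) := mul_left_cancel₀ h2πI e1
      have e3 : (c : ℂ) = (n : ℂ) * (nf : ℂ) := (div_eq_iff hnf0).mp e2
      have e4 : c = n * (nf : ℤ) := by exact_mod_cast e3
      exact ⟨n, e4.trans (mul_comm n (nf : ℤ))⟩
    have hreindex : ∑ ℓ ∈ Finset.Icc (-(nf : ℤ) / 2) ((nf : ℤ) / 2 - 1), w ^ ℓ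
        = ∑ j ∈ Finset.range nf, w ^ ((j : ℤ) - a) := by
      refine Finset.sum_nbij' (i := fun ℓ => (ℓ + a).toNat) (j := fun n => (n : ℤ) - a)
        ?_ ?_ ?_ ?_ ?_
      · intro ℓ hℓ
        simp only [Finset.mem_Icc] at hℓ
        simp only [Finset.mem_range]
        omega
      · intro j hj
        simp only [Finset.mem_range] at hj
        simp only [Finset.mem_Icc]
        omega
      · intro ℓ hℓ
        simp only [Finset.mem_Icc] at hℓ
        omega
      · intro j hj
        simp only [Finset.mem_range] at hj
        omega
      · intro ℓ hℓ
        simp only [Finset.mem_Icc] at hℓ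
        congr 1
        omega
    have hshift : ∑ j ∈ Finset.range nf, w ^ ((j : ℤ) - a)
        = w ^ (-a) * ∑ j ∈ Finset.range nf, w ^ j := by
      rw [Finset.mul_sum]
      refine Finset.sum_congr rfl fun j _ => ?_
      rw [← zpow_natCast w j, ← zpow_add₀ hw0]
      congr 1
      omega
    rw [Finset.sum_congr rfl (fun ℓ _ => hterm ℓ), hreindex, hshift, geom_sum_eq hw1, hwnf,
      if_neg hdvd]
    simp

/-- The 1D aliasing identity for particle-mesh spreading: for a Schwartz window `φ`,
grid spacing `h > 0`, even `n_f > 0` and `L = n_f h`, the DFT of the samples of the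
periodization `φ̃(x) = Σ_n φ(x+Ln)` shifted by `r` equals the sum of the true Fourier
coefficient and its aliased images at frequencies shifted by multiples of `2π n_f/L`. -/
theorem spreading_aliasing_identity (φ : SchwartzMap ℝ ℂ) (h : ℝ) (hh : 0 < h)
    (nf : ℕ) (hnf : 0 < nf) (hEven : Even nf) (L : ℝ) (hL : L = nf * h)
    (φt : ℝ → ℂ) (hφt : ∀ x, φt x = ∑' n : ℤ, φ (x + L * n)) (r : ℝ) :
    ∀ k : ℤ,
      ∑ ℓ ∈ Finset.Icc (-(nf : ℤ) / 2) ((nf : ℤ) / 2 - 1),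
        Complex.exp (2 * π * Complex.I * k * ℓ / nf) * φt (r - h * ℓ)
      = (1 / (h : ℂ)) * ∑' m : ℤ,
          fourierNeg (fun x => φ x) ((2 * π / L) * (k + m * nf))
            * Complex.exp (Complex.I * (((2 * π / L) * (k + m * nf) : ℝ)) * r) := by
  intro k
  have hLpos : 0 < L := by rw [hL]; positivity
  have hL0 : L ≠ 0 := hLpos.ne'
  have hL0C : (L : ℂ) ≠ 0 := Complex.ofReal_ne_zero.mpr hL0
  have hh0C : (h : ℂ) ≠ 0 := Complex.ofReal_ne_zero.mpr hh.ne'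
  have hnf0C : (nf : ℂ) ≠ 0 := Nat.cast_ne_zero.mpr hnf.ne'
  have hLC : (L : ℂ) = (nf : ℂ) * (h : ℂ) := by rw [hL]; push_cast; ring
  -- the dilated Schwartz function
  let e : ℝ ≃L[ℝ] ℝ := (LinearEquiv.smulOfNeZero ℝ ℝ L hL0).toContinuousLinearEquiv
  let gS : SchwartzMap ℝ ℂ := SchwartzMap.compCLMOfContinuousLinearEquiv ℝ e φ
  have hgS : ∀ x : ℝ, gS x = φ (L * x) := fun x => rfl
  let Ψ : SchwartzMap ℝ ℂ := SchwartzMap.fourierTransformCLM ℝ gS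
  -- value of Ψ
  have hΨ : ∀ w : ℝ, Ψ w = (1 / (L : ℂ)) * fourierNeg (fun x => φ x) (2 * π * w / L) := by
    intro w
    have h1 : Ψ w = FourierTransform.fourier (fun x => gS x) w := rfl
    rw [h1]
    simp_rw [hgS]
    rw [Real.fourier_real_eq_integral_exp_smul]
    have hpt : ∀ v : ℝ, Complex.exp (↑(-2 * π * v * w) * Complex.I) • φ (L * v)
        = (fun u : ℝ => φ u * Complex.exp (-(Complex.I * ((2 * π * w / L : ℝ) : ℂ) * (u : ℂ)))) (L * v) := by
      intro v
      simp only [smul_eq_mul]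
      rw [mul_comm]
      congr 1
      congr 1
      push_cast
      field_simp [Complex.ofReal_ne_zero.mpr hL0]
    simp_rw [hpt]
    rw [Measure.integral_comp_mul_left
      (fun u : ℝ => φ u * Complex.exp (-(Complex.I * ((2 * π * w / L : ℝ) : ℂ) * (u : ℂ)))) L]
    rw [abs_of_pos (inv_pos.mpr hLpos)]
    rw [fourierNeg, Complex.real_smul, Complex.ofReal_inv, one_div]
  -- Poisson summation with period L
  have hPoisson : ∀ y : ℝ, φt y
      = ∑' m : ℤ, Ψ m * Complex.exp (2 * π * Complex.I * m * ((y : ℝ) : ℂ) / L) := by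
    intro y
    rw [hφt]
    have hl : ∀ n : ℤ, φ (y + L * n) = gS (y / L + n) := by
      intro n; rw [hgS]; congr 1; field_simp
    calc ∑' n : ℤ, φ (y + L * n) = ∑' n : ℤ, gS (y / L + n) := tsum_congr hl
      _ = ∑' m : ℤ, SchwartzMap.fourierTransformCLM ℝ gS m * fourier m ((y / L : ℝ) : UnitAddCircle) :=
          SchwartzMap.tsum_eq_tsum_fourier gS (y / L)
      _ = ∑' m : ℤ, Ψ m * Complex.exp (2 * π * Complex.I * m * ((y : ℝ) : ℂ) / L) := by
          refine tsum_congr fun m => ?_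
          congr 1
          rw [fourier_coe_apply]
          congr 1
          push_cast
          field_simp
  -- summability
  have hΨsum : Summable fun m : ℤ => ‖Ψ m‖ := by
    have h1 := Ψ.isBigO_cocompact_rpow (-2)
    have h2 := h1.comp_tendsto Int.tendsto_coe_cofinite
    exact summable_of_isBigO (Real.summable_abs_int_rpow one_lt_two) h2.norm_left
  have hsumInner : ∀ c : ℝ, Summable fun m : ℤ =>
      Ψ m * Complex.exp (2 * π * Complex.I * m * ((c : ℝ) : ℂ) / L) := by
    intro c
    apply Summable.of_norm
    have he : ∀ m : ℤ, ‖Ψ (m : ℝ) * Complex.exp (2 * π * Complex.I * m * ((c : ℝ) : ℂ) / L)‖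
        = ‖Ψ (m : ℝ)‖ := by
      intro m
      rw [norm_mul, norm_exp_eq_one' (2 * π * m * c / L) (by push_cast; ring), mul_one]
    simpa only [he] using hΨsum
  have hsum2 : ∀ ℓ : ℤ, Summable fun m : ℤ =>
      Complex.exp (2 * π * Complex.I * k * ℓ / nf)
        * (Ψ m * Complex.exp (2 * π * Complex.I * m * (((r - h * (ℓ : ℝ)) : ℝ) : ℂ) / L)) :=
    fun ℓ => (hsumInner (r - h * ℓ)).mul_left _
  have hg : Function.Injective (fun m' : ℤ => k + m' * (nf : ℤ)) := by
    intro a b hab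
    simp only [add_right_inj] at hab
    exact mul_right_cancel₀ (by exact_mod_cast hnf.ne') hab
  have hsupp : Function.support (fun m : ℤ =>
        (Ψ m * Complex.exp (2 * π * Complex.I * m * r / L))
          * (if (nf : ℤ) ∣ (k - m) then (nf : ℂ) else 0))
      ⊆ Set.range (fun m' : ℤ => k + m' * (nf : ℤ)) := by
    intro m hm
    by_contra hr
    apply hm
    have hnd : ¬ (nf : ℤ) ∣ (k - m) := by
      rintro ⟨t, htt⟩
      exact hr ⟨-t, by simp only; linear_combination htt⟩
    simp only [if_neg hnd, mul_zero]
  calc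
    ∑ ℓ ∈ Finset.Icc (-(nf : ℤ) / 2) ((nf : ℤ) / 2 - 1),
        Complex.exp (2 * π * Complex.I * k * ℓ / nf) * φt (r - h * ℓ)
      = ∑ ℓ ∈ Finset.Icc (-(nf : ℤ) / 2) ((nf : ℤ) / 2 - 1), ∑' m : ℤ,
          Complex.exp (2 * π * Complex.I * k * ℓ / nf)
            * (Ψ m * Complex.exp (2 * π * Complex.I * m * (((r - h * (ℓ : ℝ)) : ℝ) : ℂ) / L)) := by
        refine Finset.sum_congr rfl fun ℓ _ => ?_
        rw [hPoisson (r - h * ℓ), ← tsum_mul_left]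
    _ = ∑' m : ℤ, ∑ ℓ ∈ Finset.Icc (-(nf : ℤ) / 2) ((nf : ℤ) / 2 - 1),
          Complex.exp (2 * π * Complex.I * k * ℓ / nf)
            * (Ψ m * Complex.exp (2 * π * Complex.I * m * (((r - h * (ℓ : ℝ)) : ℝ) : ℂ) / L)) :=
        (Summable.tsum_finsetSum fun ℓ _ => hsum2 ℓ).symm
    _ = ∑' m : ℤ, (Ψ m * Complex.exp (2 * π * Complex.I * m * r / L))
          * ∑ ℓ ∈ Finset.Icc (-(nf : ℤ) / 2) ((nf : ℤ) / 2 - 1),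
            Complex.exp (2 * π * Complex.I * ((k - m : ℤ) : ℂ) * ℓ / nf) := by
        refine tsum_congr fun m => ?_
        rw [Finset.mul_sum]
        refine Finset.sum_congr rfl fun ℓ _ => ?_
        have hE : (2 * ↑π * Complex.I * k * ℓ / nf)
              + (2 * ↑π * Complex.I * m * (((r - h * (ℓ : ℝ)) : ℝ) : ℂ) / L)
            = (2 * ↑π * Complex.I * m * r / L)
              + (2 * ↑π * Complex.I * ((k - m : ℤ) : ℂ) * ℓ / nf) := by
          rw [hLC]
          push_cast
          field_simp
          ring
        calc Complex.exp (2 * ↑π * Complex.I * k * ℓ / nf)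
              * (Ψ m * Complex.exp (2 * ↑π * Complex.I * m * (((r - h * (ℓ : ℝ)) : ℝ) : ℂ) / L))
            = Ψ m * Complex.exp ((2 * ↑π * Complex.I * k * ℓ / nf)
                + (2 * ↑π * Complex.I * m * (((r - h * (ℓ : ℝ)) : ℝ) : ℂ) / L)) := by
              rw [Complex.exp_add]; ring
          _ = Ψ m * Complex.exp ((2 * ↑π * Complex.I * m * r / L)
                + (2 * ↑π * Complex.I * ((k - m : ℤ) : ℂ) * ℓ / nf)) := by rw [hE]
          _ = (Ψ m * Complex.exp (2 * ↑π * Complex.I * m * r / L))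
                * Complex.exp (2 * ↑π * Complex.I * ((k - m : ℤ) : ℂ) * ℓ / nf) := by
              rw [Complex.exp_add]; ring
    _ = ∑' m : ℤ, (Ψ m * Complex.exp (2 * π * Complex.I * m * r / L))
          * (if (nf : ℤ) ∣ (k - m) then (nf : ℂ) else 0) :=
        tsum_congr fun m => by rw [char_sum nf hnf hEven (k - m)]
    _ = ∑' m' : ℤ, (Ψ (((k + m' * (nf : ℤ) : ℤ)) : ℝ)
          * Complex.exp (2 * π * Complex.I * (((k + m' * (nf : ℤ) : ℤ)) : ℂ) * r / L)) * (nf : ℂ) := by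
        rw [← Function.Injective.tsum_eq hg hsupp]
        refine tsum_congr fun m' => ?_
        rw [if_pos ⟨-m', by ring⟩]
    _ = (1 / (h : ℂ)) * ∑' m : ℤ,
          fourierNeg (fun x => φ x) ((2 * π / L) * (k + m * nf))
            * Complex.exp (Complex.I * (((2 * π / L) * (k + m * nf) : ℝ)) * r) := by
        rw [← tsum_mul_left]
        refine tsum_congr fun m => ?_
        rw [hΨ (((k + m * (nf : ℤ) : ℤ)) : ℝ)]
        have hfreq : 2 * π * (((k + m * (nf : ℤ) : ℤ)) : ℝ) / L
            = (2 * π / L) * ((k : ℝ) + (m : ℝ) * (nf : ℝ)) := by push_cast; ring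
        rw [hfreq]
        have hexp : (2 * ↑π * Complex.I * (((k + m * (nf : ℤ) : ℤ)) : ℂ) * r / L)
            = Complex.I * ((((2 * π / L) * ((k : ℝ) + (m : ℝ) * (nf : ℝ))) : ℝ) : ℂ) * r := by
          push_cast; ring
        rw [hexp, hLC]
        field_simp

end
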